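/- Let q ≥ 2 and consider the equation L: qx + qy = z. Then for every n, the number of maximal L-free subsets of {1,...,n} is at least 2^((n−6q)/(2q)). -/
import Mathlib

open Finset

namespace Stmt16Aux

def Free (q : ℕ) (A : Finset ℕ) : Prop :=
  ∀ x ∈ A, ∀ y ∈ A, ∀ z ∈ A, q * x + q * y ≠ z

instance (q : ℕ) (A : Finset ℕ) : Decidable (Free q A) :=
  inferInstanceAs (Decidable (∀ x ∈ A, ∀ y ∈ A, ∀ z ∈ A, q * x + q * y ≠ z))

theorem exists_maximal (q n : ℕ) (A : Finset ℕ) (hA : A ⊆ Finset.Icc 1 n)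
    (hfree : Free q A) :
    ∃ M : Finset ℕ, A ⊆ M ∧ M ⊆ Finset.Icc 1 n ∧ Free q M ∧
      ∀ B : Finset ℕ, B ⊆ Finset.Icc 1 n → Free q B → M ⊆ B → M = B := by
  classical
  set t : Finset (Finset ℕ) :=
    (Finset.Icc 1 n).powerset.filter (fun B => Free q B ∧ A ⊆ B) with ht
  have hAt : A ∈ t := by
    simp only [ht, Finset.mem_filter, Finset.mem_powerset]
    exact ⟨hA, hfree, Finset.Subset.refl A⟩
  obtain ⟨M, hMt, hmax⟩ := Finset.exists_max_image t Finset.card ⟨A, hAt⟩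
  simp only [ht, Finset.mem_filter, Finset.mem_powerset] at hMt
  refine ⟨M, hMt.2.2, hMt.1, hMt.2.1, ?_⟩
  intro B hB hBfree hMB
  have hBt : B ∈ t := by
    simp only [ht, Finset.mem_filter, Finset.mem_powerset]
    exact ⟨hB, hBfree, hMt.2.2.trans hMB⟩
  exact Finset.eq_of_subset_of_card_le hMB (hmax B hBt)

def X (q n : ℕ) : Finset ℕ := (Finset.Ioc (n / (2*q)) (n / q - 1)).erase (2*q)

lemma mem_X {q n x : ℕ} (hx : x ∈ X q n) :
    n / (2*q) < x ∧ x ≤ n / q - 1 ∧ x ≠ 2*q := by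
  simp only [X, Finset.mem_erase, Finset.mem_Ioc] at hx
  tauto

def seed (q n : ℕ) (T : Finset ℕ) : Finset ℕ :=
  insert 1 (T ∪ (X q n \ T).image (fun x => q * x + q))

lemma mem_seed {q n : ℕ} {T : Finset ℕ} {u : ℕ} (hu : u ∈ seed q n T) :
    u = 1 ∨ u ∈ T ∨ ∃ x, x ∈ X q n ∧ x ∉ T ∧ u = q * x + q := by
  simp only [seed, Finset.mem_insert, Finset.mem_union, Finset.mem_image,
    Finset.mem_sdiff] at hu
  rcases hu with h | h | ⟨x, ⟨hx1, hx2⟩, hx3⟩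
  · exact Or.inl h
  · exact Or.inr (Or.inl h)
  · exact Or.inr (Or.inr ⟨x, hx1, hx2, hx3.symm⟩)

lemma seed_subset {q n : ℕ} (hq : 2 ≤ q) (hn : 6*q + 1 ≤ n) {T : Finset ℕ}
    (hT : T ⊆ X q n) : seed q n T ⊆ Finset.Icc 1 n := by
  have hq0 : 0 < q := by omega
  have hqd : q * (n / q) + n % q = n := Nat.div_add_mod n q
  have hr1 : n % q < q := Nat.mod_lt _ hq0
  have hd1 : 1 ≤ n / q := by
    rcases Nat.eq_zero_or_pos (n / q) with h0 | h0
    · rw [h0, Nat.mul_zero] at hqd; omega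
    · exact h0
  have hsub : n / q - 1 + 1 = n / q := Nat.sub_add_cancel hd1
  have hdn : n / q ≤ n := Nat.div_le_self n q
  intro u hu
  rw [Finset.mem_Icc]
  rcases mem_seed hu with rfl | huT | ⟨x, hxX, _, rfl⟩
  · omega
  · have hx := mem_X (hT huT)
    have hu1 : 0 < u := Nat.lt_of_le_of_lt (Nat.zero_le _) hx.1
    omega
  · have hx := mem_X hxX
    have hx1 : x + 1 ≤ n / q := by omega
    have hmul : q * (x + 1) ≤ q * (n / q) := Nat.mul_le_mul (le_refl q) hx1
    rw [Nat.mul_succ] at hmul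
    omega

lemma seed_free {q n : ℕ} (hq : 2 ≤ q) (hn : 6*q + 1 ≤ n) {T : Finset ℕ}
    (hT : T ⊆ X q n) : Free q (seed q n T) := by
  have hq0 : 0 < q := by omega
  have h2qa : 2 * q * (n / (2*q)) + n % (2*q) = n := Nat.div_add_mod n (2*q)
  rw [mul_assoc] at h2qa
  have hr2 : n % (2*q) < 2*q := Nat.mod_lt _ (by omega)
  have hqd : q * (n / q) + n % q = n := Nat.div_add_mod n q
  have hr1 : n % q < q := Nat.mod_lt _ hq0
  have ha1 : 1 ≤ n / (2*q) := by
    rcases Nat.eq_zero_or_pos (n / (2*q)) with h0 | h0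
    · rw [h0, Nat.mul_zero] at h2qa; omega
    · exact h0
  have hd1 : 1 ≤ n / q := by
    rcases Nat.eq_zero_or_pos (n / q) with h0 | h0
    · rw [h0, Nat.mul_zero] at hqd; omega
    · exact h0
  have hsub : n / q - 1 + 1 = n / q := Nat.sub_add_cancel hd1
  -- n / q ≤ 2 * (n/(2q)) + 1
  have hd2a : n / q ≤ 2 * (n / (2*q)) + 1 := by
    have h' : q * (n / q) < q * (2 * (n / (2*q) + 1)) := by
      have he : q * (2 * (n / (2*q) + 1)) = 2 * (q * (n / (2*q))) + 2 * q := by ring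
      omega
    have := Nat.lt_of_mul_lt_mul_left h'
    omega
  have hxX : ∀ x ∈ X q n, n / (2*q) + 1 ≤ x ∧ x + 1 ≤ n / q ∧ x ≠ 2*q := by
    intro x hx
    have h := mem_X hx
    exact ⟨by omega, by omega, h.2.2⟩
  -- every element ≤ n
  have hle : ∀ u ∈ seed q n T, u ≤ n := by
    intro u hu
    rcases mem_seed hu with rfl | huT | ⟨x, hxX', _, rfl⟩
    · omega
    · have h := hxX u (hT huT)
      have hdn : n / q ≤ n := Nat.div_le_self n q
      omega
    · have h := hxX x hxX'
      have hmul : q * (x + 1) ≤ q * (n / q) := Nat.mul_le_mul (le_refl q) h.2.1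
      rw [Nat.mul_succ] at hmul
      omega
  -- every non-1 element ≥ a+1
  have hlow : ∀ u ∈ seed q n T, u ≠ 1 → n / (2*q) + 1 ≤ u := by
    intro u hu hu1
    rcases mem_seed hu with rfl | huT | ⟨x, hxX', _, rfl⟩
    · omega
    · exact (hxX u (hT huT)).1
    · have h := hxX x hxX'
      have : x ≤ q * x := Nat.le_mul_of_pos_left x hq0
      omega
  -- sums of two large elements exceed n
  have hsum : ∀ u v : ℕ, n / (2*q) + 1 ≤ u → n / (2*q) + 1 ≤ v → n < q*u + q*v := by
    intro u v h1 h2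
    have m1 : q * (n / (2*q) + 1) ≤ q * u := Nat.mul_le_mul (le_refl q) h1
    have m2 : q * (n / (2*q) + 1) ≤ q * v := Nat.mul_le_mul (le_refl q) h2
    rw [Nat.mul_succ] at m1 m2
    omega
  -- key: no solution with first summand 1
  have key : ∀ v ∈ seed q n T, ∀ w ∈ seed q n T, q + q * v ≠ w := by
    intro v hv w hw heq
    have hwn := hle w hw
    rcases mem_seed hv with rfl | hvT | ⟨x, hxX', hxT, rfl⟩
    · -- v = 1 : w = 2q
      rcases mem_seed hw with rfl | hwT | ⟨y, hyX, _, rfl⟩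
      · omega
      · have hw2q : w = 2*q := by omega
        exact (hxX w (hT hwT)).2.2 hw2q
      · have h' : q * y = q * 1 := by rw [mul_one]; omega
        have hy1 : y = 1 := Nat.eq_of_mul_eq_mul_left hq0 h'
        have := (hxX y hyX).1
        omega
    · -- v ∈ T
      have hvX := hxX v (hT hvT)
      rcases mem_seed hw with rfl | hwT | ⟨y, hyX, hyT, hyw⟩
      · have : 2*v ≤ q*v := Nat.mul_le_mul hq (le_refl v)
        omega
      · -- w ∈ T : but q + q*v > n/q - 1 ≥ w
        have hwX := hxX w (hT hwT)
        have h2v : 2*v ≤ q*v := Nat.mul_le_mul hq (le_refl v)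
        omega
      · -- w = q*y + q : then v = y, contradiction
        have h' : q * v = q * y := by omega
        have : v = y := Nat.eq_of_mul_eq_mul_left hq0 h'
        exact hyT (this ▸ hvT)
    · -- v = q*x + q : sum too big
      have hxx := hxX x hxX'
      have h2 : 2*(q*x+q) ≤ q*(q*x+q) := Nat.mul_le_mul hq (le_refl _)
      have h3 : q*(n / (2*q) + 1) ≤ q*x := Nat.mul_le_mul (le_refl q) hxx.1
      rw [Nat.mul_succ] at h3
      omega
  intro u hu v hv w hw heq
  by_cases hu1 : u = 1
  · subst hu1
    rw [mul_one] at heq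
    exact key v hv w hw heq
  by_cases hv1 : v = 1
  · subst hv1
    rw [mul_one] at heq
    exact key u hu w hw (by omega)
  · have h1 := hlow u hu hu1
    have h2 := hlow v hv hv1
    have h3 := hsum u v h1 h2
    have h4 := hle w hw
    omega

lemma card_X {q n : ℕ} (hq : 2 ≤ q) (hn : 6*q + 1 ≤ n) :
    n ≤ 2*(q*(X q n).card) + 6*q := by
  have hq0 : 0 < q := by omega
  have h2qa : 2 * q * (n / (2*q)) + n % (2*q) = n := Nat.div_add_mod n (2*q)
  rw [mul_assoc] at h2qa
  have hr2 : n % (2*q) < 2*q := Nat.mod_lt _ (by omega)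
  have hqd : q * (n / q) + n % q = n := Nat.div_add_mod n q
  have hr1 : n % q < q := Nat.mod_lt _ hq0
  have hd1 : 1 ≤ n / q := by
    rcases Nat.eq_zero_or_pos (n / q) with h0 | h0
    · rw [h0, Nat.mul_zero] at hqd; omega
    · exact h0
  have hsub : n / q - 1 + 1 = n / q := Nat.sub_add_cancel hd1
  have hcard : (Finset.Ioc (n / (2*q)) (n / q - 1)).card - 1 ≤ (X q n).card :=
    Finset.pred_card_le_card_erase
  rw [Nat.card_Ioc] at hcard
  have hlin : n / q ≤ (X q n).card + n / (2*q) + 2 := by omega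
  have hm : q * (n / q) ≤ q * ((X q n).card + n / (2*q) + 2) :=
    Nat.mul_le_mul (le_refl q) hlin
  have he : q * ((X q n).card + n / (2*q) + 2) =
      q * (X q n).card + q * (n / (2*q)) + 2 * q := by ring
  omega

end Stmt16Aux

open Stmt16Aux in
/-- For the equation `qx + qy = z` with `q ≥ 2`, the number of maximal solution-free
subsets of `[n]` is at least `2^((n - 6q)/(2q))`. -/
theorem stmt16 (q : ℕ) (hq : 2 ≤ q) (n : ℕ) :
    (2 : ℝ) ^ (((n : ℝ) - 6 * q) / (2 * q)) ≤
      (Nat.card {A : Finset ℕ // A ⊆ Finset.Icc 1 n ∧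
        (∀ x ∈ A, ∀ y ∈ A, ∀ z ∈ A, q * x + q * y ≠ z) ∧
        ∀ B : Finset ℕ, B ⊆ Finset.Icc 1 n →
          (∀ x ∈ B, ∀ y ∈ B, ∀ z ∈ B, q * x + q * y ≠ z) → A ⊆ B → A = B} : ℝ) := by
  classical
  set P : Finset ℕ → Prop := fun A => A ⊆ Finset.Icc 1 n ∧
        (∀ x ∈ A, ∀ y ∈ A, ∀ z ∈ A, q * x + q * y ≠ z) ∧
        ∀ B : Finset ℕ, B ⊆ Finset.Icc 1 n →
          (∀ x ∈ B, ∀ y ∈ B, ∀ z ∈ B, q * x + q * y ≠ z) → A ⊆ B → A = B with hP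
  haveI : Finite {A : Finset ℕ // P A} := by
    apply Finite.of_injective
      (fun A => (⟨A.1, Finset.mem_powerset.mpr A.2.1⟩ :
        {B // B ∈ (Finset.Icc 1 n).powerset}))
    intro A B h
    have h' := congrArg Subtype.val h
    exact Subtype.ext h' 
  have hq0 : (0:ℝ) < 2 * q := by positivity
  by_cases hn : 6*q + 1 ≤ n
  · -- main case
    have hex : ∀ T : Finset ℕ, T ⊆ X q n →
        ∃ M : Finset ℕ, seed q n T ⊆ M ∧ P M := by
      intro T hT
      obtain ⟨M, h1, h2, h3, h4⟩ :=
        exists_maximal q n (seed q n T) (seed_subset hq hn hT) (seed_free hq hn hT)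
      exact ⟨M, h1, h2, h3, h4⟩
    set F : {T // T ∈ (X q n).powerset} → {A : Finset ℕ // P A} :=
      fun T => ⟨(hex T.1 (Finset.mem_powerset.mp T.2)).choose,
        (hex T.1 (Finset.mem_powerset.mp T.2)).choose_spec.2⟩ with hF
    have hone : ∀ (T : Finset ℕ) (hT : T ⊆ X q n),
        (1 : ℕ) ∈ (hex T hT).choose := by
      intro T hT
      exact (hex T hT).choose_spec.1 (Finset.mem_insert_self 1 _)
    have hinj : Function.Injective F := by
      intro T1 T2 h
      have hMeq : (hex T1.1 (Finset.mem_powerset.mp T1.2)).choose =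
          (hex T2.1 (Finset.mem_powerset.mp T2.2)).choose :=
        congrArg Subtype.val h
      apply Subtype.ext
      by_contra hne
      have hkey : ∀ (T T' : Finset ℕ) (hT : T ⊆ X q n) (hT' : T' ⊆ X q n),
          (hex T hT).choose = (hex T' hT').choose →
          ∀ x, x ∈ T → x ∉ T' → False := by
        intro T T' hT hT' hM x hxT hxT'
        have hxM : x ∈ (hex T' hT').choose := by
          rw [← hM]
          exact (hex T hT).choose_spec.1
            (Finset.mem_insert_of_mem (Finset.mem_union_left _ hxT))
        have hfxM : q * x + q ∈ (hex T' hT').choose := by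
          apply (hex T' hT').choose_spec.1
          apply Finset.mem_insert_of_mem
          apply Finset.mem_union_right
          exact Finset.mem_image_of_mem _ (Finset.mem_sdiff.mpr ⟨hT hxT, hxT'⟩)
        have h1M := hone T' hT'
        have hfree := (hex T' hT').choose_spec.2.2.1
        exact hfree x hxM 1 h1M (q*x+q) hfxM (by ring)
      have hor : ¬ T1.1 ⊆ T2.1 ∨ ¬ T2.1 ⊆ T1.1 := by
        by_contra hc
        push_neg at hc
        exact hne (Finset.Subset.antisymm hc.1 hc.2)
      rcases hor with h | h
      · obtain ⟨x, hx1, hx2⟩ := Finset.not_subset.mp h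
        exact hkey T1.1 T2.1 (Finset.mem_powerset.mp T1.2)
          (Finset.mem_powerset.mp T2.2) hMeq x hx1 hx2
      · obtain ⟨x, hx1, hx2⟩ := Finset.not_subset.mp h
        exact hkey T2.1 T1.1 (Finset.mem_powerset.mp T2.2)
          (Finset.mem_powerset.mp T1.2) hMeq.symm x hx1 hx2
    have hcard : 2 ^ (X q n).card ≤ Nat.card {A : Finset ℕ // P A} := by
      have h1 : Nat.card {T // T ∈ (X q n).powerset} ≤
          Nat.card {A : Finset ℕ // P A} :=
        Nat.card_le_card_of_injective F hinj
      have h2 : Nat.card {T // T ∈ (X q n).powerset} = 2 ^ (X q n).card := by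
        rw [Nat.card_eq_fintype_card, Fintype.card_coe, Finset.card_powerset]
      omega
    have hkn : n ≤ 2*(q*(X q n).card) + 6*q := card_X hq hn
    have hexp : ((n:ℝ) - 6*q)/(2*q) ≤ (((X q n).card : ℕ) : ℝ) := by
      rw [div_le_iff₀ hq0]
      have h : (n:ℝ) ≤ 2*(q*((X q n).card : ℝ)) + 6*q := by exact_mod_cast hkn
      nlinarith
    calc (2:ℝ) ^ (((n:ℝ) - 6*q)/(2*q))
        ≤ (2:ℝ) ^ ((((X q n).card : ℕ) : ℝ)) :=
          Real.rpow_le_rpow_of_exponent_le one_le_two hexp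
      _ = (2:ℝ) ^ ((X q n).card) := Real.rpow_natCast 2 _
      _ ≤ _ := by exact_mod_cast hcard
  · -- trivial case
    push_neg at hn
    have hle : ((n:ℝ) - 6*q) / (2*q) ≤ 0 := by
      apply div_nonpos_of_nonpos_of_nonneg
      · have : (n:ℝ) ≤ 6*q := by exact_mod_cast Nat.le_of_lt_succ (by omega)
        linarith
      · positivity
    have hne : Nonempty {A : Finset ℕ // P A} := by
      obtain ⟨M, _, h2, h3, h4⟩ := exists_maximal q n ∅ (Finset.empty_subset _)
        (fun x hx => absurd hx (Finset.notMem_empty x))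
      exact ⟨⟨M, h2, h3, h4⟩⟩
    have hpos : 1 ≤ Nat.card {A : Finset ℕ // P A} := Nat.card_pos
    calc (2:ℝ) ^ (((n:ℝ) - 6*q)/(2*q)) ≤ 1 :=
          Real.rpow_le_one_of_one_le_of_nonpos one_le_two hle
      _ ≤ _ := by exact_mod_cast hpos
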